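/- arXiv:2410.23387 — 2 statements merged into one kernel-verified Lean document; each statement's English description precedes it below -/
import Mathlib

section
/- Let a, d, V_max, P_max be positive reals, B > 0, and A, C real with A + C·a ≥ 0 and κ > A + C·a. Let g(τ) = (A + C·a + B·a²·τ²)·a·τ, let τ_R > 0 be the unique positive real with g(τ_R) = P_max, set τ₁* = min{√(d/a), V_max/a, √((κ − A − C·a)/(B·a²)), τ_R} and τ₂* = d/(a·τ₁*). Then the pair (τ₁*, τ₂*) satisfies all the constraints τ₁ > 0, a·τ₁ ≤ V_max, a·τ₁·τ₂ = d, τ₂ ≥ τ₁, g(τ₁) ≤ P_max and A + C·a + B·a²·τ₁² ≤ κ, and for every pair (τ₁, τ₂) satisfying these constraints one has τ₁* + τ₂* ≤ τ₁ + τ₂. In other words, (τ₁*, τ₂*) is an optimal solution of the segment-duration minimization problem. -/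
set_option maxHeartbeats 1600000 in
/-- Optimality of `(τ₁*, τ₂*)` for the segment-duration minimization problem:
`τ₁* = min{√(d/a), V_max/a, √((κ − A − C·a)/(B·a²)), τ_R}`, `τ₂* = d/(a·τ₁*)` satisfy
all the constraints, and any feasible pair `(τ₁, τ₂)` has total duration at least
`τ₁* + τ₂*`. -/
theorem stmt_7 (a d Vmax Pmax B A C κ τR : ℝ) (ha : 0 < a) (hd : 0 < d)
    (hV : 0 < Vmax) (hP : 0 < Pmax) (hB : 0 < B) (hAC : 0 ≤ A + C * a)
    (hκ : A + C * a < κ) (hτR : 0 < τR)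
    (hroot : (A + C * a + B * a ^ 2 * τR ^ 2) * (a * τR) = Pmax) :
    let τ₁s := min (min (Real.sqrt (d / a)) (Vmax / a))
      (min (Real.sqrt ((κ - A - C * a) / (B * a ^ 2))) τR)
    let τ₂s := d / (a * τ₁s)
    (0 < τ₁s ∧ a * τ₁s ≤ Vmax ∧ a * τ₁s * τ₂s = d ∧ τ₁s ≤ τ₂s ∧
      (A + C * a + B * a ^ 2 * τ₁s ^ 2) * (a * τ₁s) ≤ Pmax ∧
      A + C * a + B * a ^ 2 * τ₁s ^ 2 ≤ κ) ∧
    ∀ τ₁ τ₂ : ℝ, 0 < τ₁ → a * τ₁ ≤ Vmax → a * τ₁ * τ₂ = d → τ₁ ≤ τ₂ →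
      (A + C * a + B * a ^ 2 * τ₁ ^ 2) * (a * τ₁) ≤ Pmax →
      A + C * a + B * a ^ 2 * τ₁ ^ 2 ≤ κ →
      τ₁s + τ₂s ≤ τ₁ + τ₂ := by
  intro τ₁s τ₂s
  have hτ₂s : τ₂s = d / (a * τ₁s) := rfl
  have hdef : τ₁s = min (min (Real.sqrt (d / a)) (Vmax / a))
      (min (Real.sqrt ((κ - A - C * a) / (B * a ^ 2))) τR) := rfl
  clear_value τ₁s τ₂s
  have hda : 0 < d / a := div_pos hd ha
  have hBa : 0 < B * a ^ 2 := by positivity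
  have hκ' : 0 < (κ - A - C * a) / (B * a ^ 2) := div_pos (by linarith) hBa
  have h1 : 0 < Real.sqrt (d / a) := Real.sqrt_pos.2 hda
  have h2 : 0 < Vmax / a := div_pos hV ha
  have h3 : 0 < Real.sqrt ((κ - A - C * a) / (B * a ^ 2)) := Real.sqrt_pos.2 hκ'
  have hτ₁s : 0 < τ₁s := hdef ▸ lt_min (lt_min h1 h2) (lt_min h3 hτR)
  have hle1 : τ₁s ≤ Real.sqrt (d / a) :=
    hdef ▸ le_trans (min_le_left _ _) (min_le_left _ _)
  have hle2 : τ₁s ≤ Vmax / a := hdef ▸ le_trans (min_le_left _ _) (min_le_right _ _)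
  have hle3 : τ₁s ≤ Real.sqrt ((κ - A - C * a) / (B * a ^ 2)) :=
    hdef ▸ le_trans (min_le_right _ _) (min_le_left _ _)
  have hle4 : τ₁s ≤ τR := hdef ▸ le_trans (min_le_right _ _) (min_le_right _ _)
  have hsq1 : τ₁s ^ 2 ≤ d / a := by
    nlinarith [Real.sq_sqrt hda.le, hτ₁s.le, hle1]
  have hsq3 : τ₁s ^ 2 ≤ (κ - A - C * a) / (B * a ^ 2) := by
    nlinarith [Real.sq_sqrt hκ'.le, hτ₁s.le, hle3]
  have haτ : 0 < a * τ₁s := mul_pos ha hτ₁s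
  have hdist : a * τ₁s * τ₂s = d := by
    rw [hτ₂s]; field_simp
  have hκcon : A + C * a + B * a ^ 2 * τ₁s ^ 2 ≤ κ := by
    have := (le_div_iff₀ hBa).1 hsq3
    nlinarith
  refine ⟨⟨hτ₁s, ?_, hdist, ?_, ?_, hκcon⟩, ?_⟩
  · calc a * τ₁s ≤ a * (Vmax / a) := by nlinarith
      _ = Vmax := by field_simp
  · rw [hτ₂s, le_div_iff₀ haτ]
    have : a * τ₁s ^ 2 ≤ d := by
      have := (le_div_iff₀ ha).1 hsq1; linarith
    nlinarith
  · -- monotonicity of g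
    rw [← hroot]
    have hsqR : τ₁s ^ 2 ≤ τR ^ 2 := by nlinarith
    have hf1 : A + C * a + B * a ^ 2 * τ₁s ^ 2 ≤ A + C * a + B * a ^ 2 * τR ^ 2 := by
      nlinarith
    have hf2 : a * τ₁s ≤ a * τR := by nlinarith
    have hn1 : 0 ≤ a * τ₁s := haτ.le
    have hn2 : 0 ≤ A + C * a + B * a ^ 2 * τR ^ 2 := by positivity
    exact mul_le_mul hf1 hf2 hn1 hn2
  · intro τ₁ τ₂ hτ₁ hVc hdc hord hPc hκc
    have hτ₂ : τ₂ = d / (a * τ₁) := by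
      field_simp
      linarith [hdc]
    have hb1 : τ₁ ≤ Real.sqrt (d / a) := by
      have hsq : τ₁ ^ 2 ≤ d / a := by
        rw [le_div_iff₀ ha]
        have h' : a * τ₁ * τ₁ ≤ a * τ₁ * τ₂ :=
          mul_le_mul_of_nonneg_left hord (mul_pos ha hτ₁).le
        nlinarith [h', hdc]
      calc τ₁ = Real.sqrt (τ₁ ^ 2) := (Real.sqrt_sq hτ₁.le).symm
        _ ≤ Real.sqrt (d / a) := Real.sqrt_le_sqrt hsq
    have hb2 : τ₁ ≤ Vmax / a := (le_div_iff₀ ha).2 (by linarith [hVc])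
    have hb3 : τ₁ ≤ Real.sqrt ((κ - A - C * a) / (B * a ^ 2)) := by
      have hsq : τ₁ ^ 2 ≤ (κ - A - C * a) / (B * a ^ 2) := by
        rw [le_div_iff₀ hBa]
        nlinarith [hκc]
      calc τ₁ = Real.sqrt (τ₁ ^ 2) := (Real.sqrt_sq hτ₁.le).symm
        _ ≤ _ := Real.sqrt_le_sqrt hsq
    have hb4 : τ₁ ≤ τR := by
      by_contra h
      push_neg at h
      have hcube : τR ^ 3 < τ₁ ^ 3 := by exact pow_lt_pow_left₀ h hτR.le three_ne_zero
      have : Pmax < (A + C * a + B * a ^ 2 * τ₁ ^ 2) * (a * τ₁) := by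
        rw [← hroot]
        nlinarith [mul_nonneg hAC (mul_pos ha (sub_pos.2 h)).le,
          mul_pos (mul_pos hB (pow_pos ha 3)) (sub_pos.2 hcube)]
      linarith
    have hτle : τ₁ ≤ τ₁s := hdef ▸ le_min (le_min hb1 hb2) (le_min hb3 hb4)
    have hprod : a * τ₁ * τ₁s ≤ d := by
      have hss : Real.sqrt (d / a) * Real.sqrt (d / a) = d / a :=
        Real.mul_self_sqrt hda.le
      have hm : τ₁ * τ₁s ≤ d / a := by
        calc τ₁ * τ₁s ≤ Real.sqrt (d / a) * Real.sqrt (d / a) :=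
              mul_le_mul hb1 hle1 hτ₁s.le (Real.sqrt_nonneg _)
          _ = d / a := hss
      have := (le_div_iff₀' ha).1 hm
      linarith [this]
    have hpos : 0 < a * τ₁ * τ₁s := by positivity
    have heq : τ₁ + τ₂ - (τ₁s + τ₂s) =
        (τ₁ - τ₁s) * (a * τ₁ * τ₁s - d) / (a * τ₁ * τ₁s) := by
      rw [hτ₂, hτ₂s]
      field_simp
      ring
    have hnum : 0 ≤ (τ₁ - τ₁s) * (a * τ₁ * τ₁s - d) := by
      nlinarith [mul_nonneg (sub_nonneg.2 hτle) (sub_nonneg.2 hprod)]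
    have := div_nonneg hnum hpos.le
    linarith
end

section
/- Let a > 0, B > 0 and K < 0 be real numbers, set τ̄ = √(−K/(B·a²)), let T > τ̄, let η_t, η_m, η_rb > 0, define h(τ) = (K + B·a²·τ²)·a·τ, and define the battery power P_bat(τ) = h(τ)/(η_t·η_m) if h(τ) ≥ 0 and P_bat(τ) = η_t·η_m·η_rb·h(τ) if h(τ) < 0. Then ∫₀ᵀ P_bat(τ) dτ = η_t·η_m·η_rb · ( (1/2)·K·a·τ̄² + (1/4)·B·a³·τ̄⁴ ) + (1/(η_t·η_m)) · ( (1/2)·K·a·(T² − τ̄²) + (1/4)·B·a³·(T⁴ − τ̄⁴) ). -/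
/-- For `K < 0`, `τ̄ = √(−K/(B·a²))` and `T > τ̄`, the battery power associated with the
wheel power `h τ = (K + B·a²·τ²)·a·τ` integrates over `[0, T]` to the sum of a
regenerative part on `[0, τ̄]` and a traction part on `[τ̄, T]`. -/
theorem stmt_12 (a B K T ηt ηm ηrb : ℝ) (ha : 0 < a) (hB : 0 < B) (hK : K < 0)
    (hT : Real.sqrt (-K / (B * a ^ 2)) < T)
    (hηt : 0 < ηt) (hηm : 0 < ηm) (hηrb : 0 < ηrb) :
    let τb := Real.sqrt (-K / (B * a ^ 2))
    ∫ τ in (0:ℝ)..T,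
        (if 0 ≤ (K + B * a ^ 2 * τ ^ 2) * (a * τ) then
          (K + B * a ^ 2 * τ ^ 2) * (a * τ) / (ηt * ηm)
        else
          ηt * ηm * ηrb * ((K + B * a ^ 2 * τ ^ 2) * (a * τ))) =
      ηt * ηm * ηrb * ((1 / 2) * K * a * τb ^ 2 + (1 / 4) * B * a ^ 3 * τb ^ 4) +
        (1 / (ηt * ηm)) *
          ((1 / 2) * K * a * (T ^ 2 - τb ^ 2) + (1 / 4) * B * a ^ 3 * (T ^ 4 - τb ^ 4)) := by
  intro τb
  set h : ℝ → ℝ := fun τ => (K + B * a ^ 2 * τ ^ 2) * (a * τ) with hh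
  set g : ℝ → ℝ := fun τ => max (h τ) 0 / (ηt * ηm) + ηt * ηm * ηrb * min (h τ) 0 with hg
  have hBa2 : 0 < B * a ^ 2 := by positivity
  have hτb_nonneg : 0 ≤ τb := Real.sqrt_nonneg _
  have hτb2 : τb ^ 2 = -K / (B * a ^ 2) :=
    Real.sq_sqrt (div_nonneg (neg_nonneg.mpr hK.le) hBa2.le)
  have hKτb : K + B * a ^ 2 * τb ^ 2 = 0 := by
    rw [hτb2]; field_simp; ring
  have hcont : Continuous h := by fun_prop
  have hgcont : Continuous g := by
    apply Continuous.add
    · exact (hcont.max continuous_const).div_const _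
    · exact continuous_const.mul (hcont.min continuous_const)
  -- the integrand equals g
  have heq : ∀ τ : ℝ,
      (if 0 ≤ (K + B * a ^ 2 * τ ^ 2) * (a * τ) then
          (K + B * a ^ 2 * τ ^ 2) * (a * τ) / (ηt * ηm)
        else
          ηt * ηm * ηrb * ((K + B * a ^ 2 * τ ^ 2) * (a * τ))) = g τ := by
    intro τ
    by_cases h0 : 0 ≤ h τ
    · simp only [hg, hh] at *
      rw [if_pos h0, max_eq_left h0, min_eq_right h0, mul_zero, add_zero]
    · push_neg at h0
      simp only [hg, hh] at *
      rw [if_neg (not_le.mpr h0), max_eq_right h0.le, min_eq_left h0.le, zero_div, zero_add]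
  -- antiderivative computation
  have key : ∀ x : ℝ, ∫ τ in (0:ℝ)..x, h τ
      = (1 / 2) * K * a * x ^ 2 + (1 / 4) * B * a ^ 3 * x ^ 4 := by
    intro x
    have h1 : ∀ τ ∈ Set.uIcc (0:ℝ) x, h τ = K * a * τ + B * a ^ 3 * τ ^ 3 :=
      fun τ _ => by simp only [hh]; ring
    have i1 : IntervalIntegrable (fun τ : ℝ => K * a * τ) MeasureTheory.volume 0 x :=
      ((continuous_const.mul continuous_id').intervalIntegrable _ _)
    have i3 : IntervalIntegrable (fun τ : ℝ => B * a ^ 3 * τ ^ 3) MeasureTheory.volume 0 x :=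
      ((continuous_const.mul (continuous_pow 3)).intervalIntegrable _ _)
    rw [intervalIntegral.integral_congr h1, intervalIntegral.integral_add i1 i3,
      intervalIntegral.integral_const_mul, intervalIntegral.integral_const_mul,
      integral_id, integral_pow]
    push_cast
    ring
  -- on [0, τb], g = ηt*ηm*ηrb * h
  have hreg : ∀ τ ∈ Set.uIcc (0:ℝ) τb, g τ = ηt * ηm * ηrb * h τ := by
    intro τ hτ
    rw [Set.uIcc_of_le hτb_nonneg] at hτ
    have hτ0 : 0 ≤ τ := hτ.1
    have hτ2 : τ ^ 2 ≤ τb ^ 2 := pow_le_pow_left₀ hτ0 hτ.2 2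
    have hneg : h τ ≤ 0 := by
      have : K + B * a ^ 2 * τ ^ 2 ≤ 0 := by nlinarith
      have := mul_nonpos_of_nonpos_of_nonneg this (by positivity : (0:ℝ) ≤ a * τ)
      simpa [hh] using this
    simp only [hg]
    rw [max_eq_right hneg, min_eq_left hneg, zero_div, zero_add]
  -- on [τb, T], g = h / (ηt*ηm)
  have htrac : ∀ τ ∈ Set.uIcc τb T, g τ = h τ / (ηt * ηm) := by
    intro τ hτ
    rw [Set.uIcc_of_le hT.le] at hτ
    have hτ0 : 0 ≤ τ := le_trans hτb_nonneg hτ.1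
    have hτ2 : τb ^ 2 ≤ τ ^ 2 := pow_le_pow_left₀ hτb_nonneg hτ.1 2
    have hpos : 0 ≤ h τ := by
      have : 0 ≤ K + B * a ^ 2 * τ ^ 2 := by nlinarith
      have := mul_nonneg this (by positivity : (0:ℝ) ≤ a * τ)
      simpa [hh] using this
    simp only [hg]
    rw [max_eq_left hpos, min_eq_right hpos, mul_zero, add_zero]
  have hsplit : (∫ τ in (0:ℝ)..τb, g τ) + (∫ τ in τb..T, g τ) = ∫ τ in (0:ℝ)..T, g τ :=
    intervalIntegral.integral_add_adjacent_intervals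
      (hgcont.intervalIntegrable _ _) (hgcont.intervalIntegrable _ _)
  calc ∫ τ in (0:ℝ)..T,
        (if 0 ≤ (K + B * a ^ 2 * τ ^ 2) * (a * τ) then
          (K + B * a ^ 2 * τ ^ 2) * (a * τ) / (ηt * ηm)
        else
          ηt * ηm * ηrb * ((K + B * a ^ 2 * τ ^ 2) * (a * τ)))
      = ∫ τ in (0:ℝ)..T, g τ := by
        apply intervalIntegral.integral_congr
        intro τ _
        exact heq τ
    _ = (∫ τ in (0:ℝ)..τb, g τ) + (∫ τ in τb..T, g τ) := hsplit.symm
    _ = (∫ τ in (0:ℝ)..τb, ηt * ηm * ηrb * h τ) + ∫ τ in τb..T, h τ / (ηt * ηm) := by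
        rw [intervalIntegral.integral_congr hreg, intervalIntegral.integral_congr htrac]
    _ = ηt * ηm * ηrb * (∫ τ in (0:ℝ)..τb, h τ)
        + ((∫ τ in (0:ℝ)..T, h τ) - ∫ τ in (0:ℝ)..τb, h τ) / (ηt * ηm) := by
        rw [intervalIntegral.integral_const_mul, intervalIntegral.integral_div,
          ← intervalIntegral.integral_interval_sub_left
            (hcont.intervalIntegrable 0 T) (hcont.intervalIntegrable 0 τb)]
    _ = _ := by
        rw [key τb, key T]
        field_simp
        ring
end
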